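/- Let (X1,Y1) and (X2,Y2) be independent pairs of discrete random variables, where X1 and X2 take values in {0,1} and have the same marginal distribution P_X, and Y1, Y2 take values in finite sets. Let U1 = X1 ⊕ X2 (addition in F_2) and U2 = X2. Then for every α ≥ 0 with α ≠ 1, H_α(U1 | (Y1,Y2)) ≥ max{ H_α(X1|Y1), H_α(X2|Y2) }. -/

import Mathlib

/-- `rpow0 a α = a ^ α` (real power) with the convention `0 ^ 0 = 0`,
so that at `α = 0` sums of `rpow0` count support sizes. -/
noncomputable def rpow0 (a α : ℝ) : ℝ := if a = 0 then 0 else a ^ α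

/-- Conditional Rényi entropy of order `α` (base-2 logarithm) of a joint
distribution `p` on `X × Y`:
`H_α(X|Y) = (1/(1-α)) * log₂ ((Σ_{x,y} p(x,y)^α) / (Σ_y P_Y(y)^α))`. -/
noncomputable def condRenyi {X Y : Type*} [Fintype X] [Fintype Y]
    (α : ℝ) (p : X × Y → ℝ) : ℝ :=
  (1 - α)⁻¹ * Real.logb 2
    ((∑ z : X × Y, rpow0 (p z) α) / (∑ y : Y, rpow0 (∑ x : X, p (x, y)) α))

lemma rpow0_nonneg {a α : ℝ} (ha : 0 ≤ a) : 0 ≤ rpow0 a α := by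
  unfold rpow0; split
  · exact le_refl 0
  · exact Real.rpow_nonneg ha α

lemma rpow0_pos {a α : ℝ} (ha : 0 < a) : 0 < rpow0 a α := by
  unfold rpow0; rw [if_neg ha.ne']; exact Real.rpow_pos_of_pos ha α

lemma rpow0_eq {a α : ℝ} (hα : α ≠ 0) : rpow0 a α = a ^ α := by
  unfold rpow0; split
  · rename_i h; rw [h, Real.zero_rpow hα]
  · rfl

lemma rpow0_mul {a b α : ℝ} (ha : 0 ≤ a) (hb : 0 ≤ b) :
    rpow0 (a * b) α = rpow0 a α * rpow0 b α := by
  unfold rpow0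
  rcases eq_or_lt_of_le ha with rfl | ha'
  · simp
  rcases eq_or_lt_of_le hb with rfl | hb'
  · simp
  rw [if_neg (by positivity), if_neg ha'.ne', if_neg hb'.ne',
    Real.mul_rpow ha hb]

lemma zsum (g : ZMod 2 → ℝ) : ∑ u, g u = g 0 + g 1 := Fin.sum_univ_two g

lemma sum_pos_of_sum_one {ι : Type*} [Fintype ι] (α : ℝ) (g : ι → ℝ)
    (hg : ∀ i, 0 ≤ g i) (hgs : (∑ i, g i) = 1) : 0 < ∑ i, rpow0 (g i) α := by
  have h : (0:ℝ) < ∑ i, g i := by rw [hgs]; norm_num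
  obtain ⟨i, -, hi⟩ := Finset.exists_lt_of_sum_lt (by simpa using h :
    ∑ i : ι, (0:ℝ) < ∑ i, g i)
  exact Finset.sum_pos' (fun j _ => rpow0_nonneg (hg j)) ⟨i, Finset.mem_univ i, rpow0_pos hi⟩

/-- The key pointwise inequality at `α = 0`. -/
lemma key_zero {x y b0 b1 : ℝ} (hx : 0 ≤ x) (hy : 0 ≤ y) (hb0 : 0 ≤ b0) (hb1 : 0 ≤ b1) :
    rpow0 (b0 + b1) 0 * (rpow0 x 0 + rpow0 y 0)
      ≤ rpow0 (x * b0 + y * b1) 0 + rpow0 (y * b0 + x * b1) 0 := by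
  have h : ∀ t : ℝ, rpow0 t 0 = if t = 0 then 0 else 1 := by
    intro t; unfold rpow0; split <;> simp [Real.rpow_zero]
  simp only [h]
  rcases eq_or_lt_of_le hx with rfl | hx <;>
  rcases eq_or_lt_of_le hy with rfl | hy <;>
  rcases eq_or_lt_of_le hb0 with rfl | hb0 <;>
  rcases eq_or_lt_of_le hb1 with rfl | hb1 <;>
  simp_all <;> split_ifs <;>
  simp_all <;> nlinarith

/-- Concavity core, `0 < α < 1`, positive total weight. -/
lemma core_lt {α x y b0 b1 : ℝ} (hα0 : 0 < α) (hα : α < 1)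
    (hx : 0 ≤ x) (hy : 0 ≤ y) (hb0 : 0 ≤ b0) (hb1 : 0 ≤ b1) (hB : 0 < b0 + b1) :
    (b0 + b1) ^ α * (x ^ α + y ^ α) ≤ (x * b0 + y * b1) ^ α + (y * b0 + x * b1) ^ α := by
  set B := b0 + b1 with hBdef
  have hcc := Real.concaveOn_rpow hα0.le hα.le
  have hw : b0 / B + b1 / B = 1 := by field_simp; exact hBdef.symm
  have j : ∀ s t : ℝ, 0 ≤ s → 0 ≤ t →
      (b0 / B) * s ^ α + (b1 / B) * t ^ α ≤ ((b0 / B) * s + (b1 / B) * t) ^ α := by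
    intro s t hs ht
    exact hcc.2 hs ht (div_nonneg hb0 hB.le) (div_nonneg hb1 hB.le) hw
  have e : ∀ s t : ℝ, 0 ≤ s → 0 ≤ t → (s * b0 + t * b1) ^ α
      = B ^ α * ((b0 / B) * s + (b1 / B) * t) ^ α := by
    intro s t hs ht
    rw [← Real.mul_rpow hB.le
      (by have := div_nonneg hb0 hB.le; have := div_nonneg hb1 hB.le; positivity)]
    congr 1
    field_simp
  have h1 := j x y hx hy
  have h2 := j y x hy hx
  have hBa : (0:ℝ) < B ^ α := Real.rpow_pos_of_pos hB α
  rw [e x y hx hy, e y x hy hx]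
  have split : x ^ α + y ^ α
      = ((b0 / B) * x ^ α + (b1 / B) * y ^ α) + ((b0 / B) * y ^ α + (b1 / B) * x ^ α) := by
    have : (b0 / B + b1 / B) * (x ^ α + y ^ α) = x ^ α + y ^ α := by rw [hw]; ring
    linarith [this]
  rw [split, mul_add]
  exact add_le_add (mul_le_mul_of_nonneg_left h1 hBa.le) (mul_le_mul_of_nonneg_left h2 hBa.le)

/-- Convexity core, `α > 1`, positive total weight. -/
lemma core_gt {α x y b0 b1 : ℝ} (hα : 1 < α)
    (hx : 0 ≤ x) (hy : 0 ≤ y) (hb0 : 0 ≤ b0) (hb1 : 0 ≤ b1) (hB : 0 < b0 + b1) :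
    (x * b0 + y * b1) ^ α + (y * b0 + x * b1) ^ α ≤ (b0 + b1) ^ α * (x ^ α + y ^ α) := by
  set B := b0 + b1 with hBdef
  have hcc := convexOn_rpow hα.le
  have hw : b0 / B + b1 / B = 1 := by field_simp; exact hBdef.symm
  have j : ∀ s t : ℝ, 0 ≤ s → 0 ≤ t →
      ((b0 / B) * s + (b1 / B) * t) ^ α ≤ (b0 / B) * s ^ α + (b1 / B) * t ^ α := by
    intro s t hs ht
    exact hcc.2 hs ht (div_nonneg hb0 hB.le) (div_nonneg hb1 hB.le) hw
  have e : ∀ s t : ℝ, 0 ≤ s → 0 ≤ t → (s * b0 + t * b1) ^ α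
      = B ^ α * ((b0 / B) * s + (b1 / B) * t) ^ α := by
    intro s t hs ht
    rw [← Real.mul_rpow hB.le
      (by have := div_nonneg hb0 hB.le; have := div_nonneg hb1 hB.le; positivity)]
    congr 1
    field_simp
  have h1 := j x y hx hy
  have h2 := j y x hy hx
  have hBa : (0:ℝ) < B ^ α := Real.rpow_pos_of_pos hB α
  rw [e x y hx hy, e y x hy hx]
  have split : x ^ α + y ^ α
      = ((b0 / B) * x ^ α + (b1 / B) * y ^ α) + ((b0 / B) * y ^ α + (b1 / B) * x ^ α) := by
    have : (b0 / B + b1 / B) * (x ^ α + y ^ α) = x ^ α + y ^ α := by rw [hw]; ring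
    linarith [this]
  rw [split, mul_add]
  exact add_le_add (mul_le_mul_of_nonneg_left h1 hBa.le) (mul_le_mul_of_nonneg_left h2 hBa.le)

/-- Key pointwise inequality for `0 ≤ α < 1`. -/
lemma key_lt {α x y b0 b1 : ℝ} (hα0 : 0 ≤ α) (hα : α < 1)
    (hx : 0 ≤ x) (hy : 0 ≤ y) (hb0 : 0 ≤ b0) (hb1 : 0 ≤ b1) :
    rpow0 (b0 + b1) α * (rpow0 x α + rpow0 y α)
      ≤ rpow0 (x * b0 + y * b1) α + rpow0 (y * b0 + x * b1) α := by
  rcases hα0.eq_or_lt with rfl | hα0'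
  · exact key_zero hx hy hb0 hb1
  rcases (add_nonneg hb0 hb1).eq_or_lt with hB | hB
  · have hb0' : b0 = 0 := by linarith
    have hb1' : b1 = 0 := by linarith
    subst hb0' hb1'
    simp [rpow0, Real.zero_rpow hα0'.ne']
  simp only [rpow0_eq hα0'.ne']
  exact core_lt hα0' hα hx hy hb0 hb1 hB

/-- Key pointwise inequality for `α > 1`. -/
lemma key_gt {α x y b0 b1 : ℝ} (hα : 1 < α)
    (hx : 0 ≤ x) (hy : 0 ≤ y) (hb0 : 0 ≤ b0) (hb1 : 0 ≤ b1) :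
    rpow0 (x * b0 + y * b1) α + rpow0 (y * b0 + x * b1) α
      ≤ rpow0 (b0 + b1) α * (rpow0 x α + rpow0 y α) := by
  have hα0 : α ≠ 0 := by linarith
  rcases (add_nonneg hb0 hb1).eq_or_lt with hB | hB
  · have hb0' : b0 = 0 := by linarith
    have hb1' : b1 = 0 := by linarith
    subst hb0' hb1'
    simp [rpow0, Real.zero_rpow hα0]
  simp only [rpow0_eq hα0]
  exact core_gt hα hx hy hb0 hb1 hB

/-- for the basic polar transform `U1 = X1 ⊕ X2`, `U2 = X2` applied to
independent pairs `(X1,Y1)`, `(X2,Y2)` with the same input marginal `P_X`,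
`H_α(U1 | (Y1,Y2)) ≥ max (H_α(X1|Y1)) (H_α(X2|Y2))` for all `α ≥ 0`, `α ≠ 1`.
The joint distribution of `(U1,(Y1,Y2))` is
`(u1,(y1,y2)) ↦ Σ_{u2} p1(u1+u2, y1) * p2(u2, y2)`. -/
theorem renyi_polar_plus
    {Y1 Y2 : Type*} [Fintype Y1] [Fintype Y2]
    (p1 : ZMod 2 × Y1 → ℝ) (p2 : ZMod 2 × Y2 → ℝ)
    (h1 : ∀ z, 0 ≤ p1 z) (h2 : ∀ z, 0 ≤ p2 z)
    (hs1 : ∑ z, p1 z = 1) (hs2 : ∑ z, p2 z = 1)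
    (hmarg : ∀ x : ZMod 2, ∑ y1, p1 (x, y1) = ∑ y2, p2 (x, y2))
    (α : ℝ) (hα0 : 0 ≤ α) (hα1 : α ≠ 1) :
    max (condRenyi α p1) (condRenyi α p2)
      ≤ condRenyi α (fun z : ZMod 2 × (Y1 × Y2) =>
          ∑ u2 : ZMod 2, p1 (z.1 + u2, z.2.1) * p2 (u2, z.2.2)) := by
  classical
  set q : ZMod 2 × (Y1 × Y2) → ℝ :=
    fun z => ∑ u2 : ZMod 2, p1 (z.1 + u2, z.2.1) * p2 (u2, z.2.2) with hq
  set N1 : ℝ := ∑ z : ZMod 2 × Y1, rpow0 (p1 z) α with hN1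
  set N2 : ℝ := ∑ z : ZMod 2 × Y2, rpow0 (p2 z) α with hN2
  set D1 : ℝ := ∑ y1 : Y1, rpow0 (∑ x : ZMod 2, p1 (x, y1)) α with hD1
  set D2 : ℝ := ∑ y2 : Y2, rpow0 (∑ x : ZMod 2, p2 (x, y2)) α with hD2
  set N : ℝ := ∑ z : ZMod 2 × (Y1 × Y2), rpow0 (q z) α with hN
  set D : ℝ := ∑ y : Y1 × Y2, rpow0 (∑ x : ZMod 2, q (x, y)) α with hD
  -- nonnegativity of q
  have hq0 : ∀ z, 0 ≤ q z := fun z =>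
    Finset.sum_nonneg fun u2 _ => mul_nonneg (h1 _) (h2 _)
  -- marginal of q factorizes
  have hqmarg : ∀ y : Y1 × Y2, ∑ x : ZMod 2, q (x, y)
      = (∑ x : ZMod 2, p1 (x, y.1)) * (∑ x : ZMod 2, p2 (x, y.2)) := by
    intro y
    simp only [hq, zsum]
    simp only [zero_add, add_zero, show (1 + 1 : ZMod 2) = 0 from by decide]
    ring
  -- D = D1 * D2
  have hDfac : D = D1 * D2 := by
    rw [hD, hD1, hD2, Finset.sum_mul_sum, Fintype.sum_prod_type]
    refine Finset.sum_congr rfl fun i _ => Finset.sum_congr rfl fun j _ => ?_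
    rw [hqmarg (i, j),
      rpow0_mul (Finset.sum_nonneg fun x _ => h1 _) (Finset.sum_nonneg fun x _ => h2 _)]
  -- marginal sums equal 1
  have hP1 : ∑ y1 : Y1, (∑ x : ZMod 2, p1 (x, y1)) = 1 := by
    rw [← hs1, Fintype.sum_prod_type_right]
  have hP2 : ∑ y2 : Y2, (∑ x : ZMod 2, p2 (x, y2)) = 1 := by
    rw [← hs2, Fintype.sum_prod_type_right]
  have hQ1 : ∑ z : ZMod 2 × (Y1 × Y2), q z = 1 := by
    rw [Fintype.sum_prod_type_right]
    calc ∑ y : Y1 × Y2, ∑ x : ZMod 2, q (x, y)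
        = ∑ y : Y1 × Y2, (∑ x : ZMod 2, p1 (x, y.1)) * (∑ x : ZMod 2, p2 (x, y.2)) :=
          Finset.sum_congr rfl fun y _ => hqmarg y
      _ = (∑ y1 : Y1, (∑ x : ZMod 2, p1 (x, y1))) * (∑ y2 : Y2, (∑ x : ZMod 2, p2 (x, y2))) := by
          rw [Finset.sum_mul_sum, Fintype.sum_prod_type]
      _ = 1 := by rw [hP1, hP2, mul_one]
  -- positivity
  have hN1pos : 0 < N1 := by rw [hN1]; exact sum_pos_of_sum_one α p1 h1 hs1
  have hN2pos : 0 < N2 := by rw [hN2]; exact sum_pos_of_sum_one α p2 h2 hs2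
  have hNpos : 0 < N := by rw [hN]; exact sum_pos_of_sum_one α q hq0 hQ1
  have hD1pos : 0 < D1 := by
    rw [hD1]
    exact sum_pos_of_sum_one α _ (fun y1 => Finset.sum_nonneg fun x _ => h1 _) hP1
  have hD2pos : 0 < D2 := by
    rw [hD2]
    exact sum_pos_of_sum_one α _ (fun y2 => Finset.sum_nonneg fun x _ => h2 _) hP2
  -- structural equalities
  have E1 : N1 * D2 = ∑ y : Y1 × Y2, rpow0 (p2 (0, y.2) + p2 (1, y.2)) α
      * (rpow0 (p1 (0, y.1)) α + rpow0 (p1 (1, y.1)) α) := by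
    rw [hN1, hD2, Fintype.sum_prod_type_right (f := fun z : ZMod 2 × Y1 => rpow0 (p1 z) α)]
    simp only [zsum]
    rw [Finset.sum_mul_sum, Fintype.sum_prod_type]
    exact Finset.sum_congr rfl fun i _ => Finset.sum_congr rfl fun j _ => by ring
  have E2 : N2 * D1 = ∑ y : Y1 × Y2, rpow0 (p1 (0, y.1) + p1 (1, y.1)) α
      * (rpow0 (p2 (0, y.2)) α + rpow0 (p2 (1, y.2)) α) := by
    rw [hN2, hD1, Fintype.sum_prod_type_right (f := fun z : ZMod 2 × Y2 => rpow0 (p2 z) α)]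
    simp only [zsum]
    rw [Finset.sum_mul_sum, Fintype.sum_prod_type, Finset.sum_comm]
    exact Finset.sum_congr rfl fun i _ => Finset.sum_congr rfl fun j _ => by ring
  have E3 : N = ∑ y : Y1 × Y2,
      (rpow0 (p1 (0, y.1) * p2 (0, y.2) + p1 (1, y.1) * p2 (1, y.2)) α
       + rpow0 (p1 (1, y.1) * p2 (0, y.2) + p1 (0, y.1) * p2 (1, y.2)) α) := by
    rw [hN, Fintype.sum_prod_type]
    simp only [hq, zsum]
    rw [← Finset.sum_add_distrib]
    refine Finset.sum_congr rfl fun y _ => ?_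
    simp only [zero_add, add_zero, show (1 + 1 : ZMod 2) = 0 from by decide]
  -- rewrite the goal
  show max ((1 - α)⁻¹ * Real.logb 2 (N1 / D1)) ((1 - α)⁻¹ * Real.logb 2 (N2 / D2))
      ≤ (1 - α)⁻¹ * Real.logb 2 (N / D)
  rw [hDfac]
  clear_value q N1 N2 D1 D2 N D
  rcases lt_or_gt_of_ne hα1 with hlt | hgt
  · -- α < 1
    have hc : (0:ℝ) ≤ (1 - α)⁻¹ := by
      have : (0:ℝ) < 1 - α := by linarith
      positivity
    have I1 : N1 * D2 ≤ N := by
      rw [E1, E3]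
      exact Finset.sum_le_sum fun y _ => key_lt hα0 hlt (h1 _) (h1 _) (h2 _) (h2 _)
    have I2 : N2 * D1 ≤ N := by
      rw [E2, E3]
      refine Finset.sum_le_sum fun y _ => ?_
      have h := key_lt hα0 hlt (h2 (0, y.2)) (h2 (1, y.2)) (h1 (0, y.1)) (h1 (1, y.1))
      have e1 : p2 (0, y.2) * p1 (0, y.1) + p2 (1, y.2) * p1 (1, y.1)
          = p1 (0, y.1) * p2 (0, y.2) + p1 (1, y.1) * p2 (1, y.2) := by ring
      have e2 : p2 (1, y.2) * p1 (0, y.1) + p2 (0, y.2) * p1 (1, y.1)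
          = p1 (1, y.1) * p2 (0, y.2) + p1 (0, y.1) * p2 (1, y.2) := by ring
      rw [e1, e2] at h
      exact h
    refine max_le ?_ ?_
    · refine mul_le_mul_of_nonneg_left ?_ hc
      refine Real.logb_le_logb_of_le one_lt_two (div_pos hN1pos hD1pos) ?_
      rw [div_le_div_iff₀ hD1pos (mul_pos hD1pos hD2pos)]
      nlinarith
    · refine mul_le_mul_of_nonneg_left ?_ hc
      refine Real.logb_le_logb_of_le one_lt_two (div_pos hN2pos hD2pos) ?_
      rw [div_le_div_iff₀ hD2pos (mul_pos hD1pos hD2pos)]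
      nlinarith
  · -- α > 1
    have hc : (1 - α)⁻¹ ≤ 0 := by
      have : 1 - α < 0 := by linarith
      exact (inv_nonpos).mpr this.le
    have I1 : N ≤ N1 * D2 := by
      rw [E1, E3]
      exact Finset.sum_le_sum fun y _ => key_gt hgt (h1 _) (h1 _) (h2 _) (h2 _)
    have I2 : N ≤ N2 * D1 := by
      rw [E2, E3]
      refine Finset.sum_le_sum fun y _ => ?_
      have h := key_gt hgt (h2 (0, y.2)) (h2 (1, y.2)) (h1 (0, y.1)) (h1 (1, y.1))
      have e1 : p2 (0, y.2) * p1 (0, y.1) + p2 (1, y.2) * p1 (1, y.1)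
          = p1 (0, y.1) * p2 (0, y.2) + p1 (1, y.1) * p2 (1, y.2) := by ring
      have e2 : p2 (1, y.2) * p1 (0, y.1) + p2 (0, y.2) * p1 (1, y.1)
          = p1 (1, y.1) * p2 (0, y.2) + p1 (0, y.1) * p2 (1, y.2) := by ring
      rw [e1, e2] at h
      exact h
    refine max_le ?_ ?_
    · refine mul_le_mul_of_nonpos_left ?_ hc
      refine Real.logb_le_logb_of_le one_lt_two (div_pos hNpos (mul_pos hD1pos hD2pos)) ?_
      rw [div_le_div_iff₀ (mul_pos hD1pos hD2pos) hD1pos]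
      nlinarith
    · refine mul_le_mul_of_nonpos_left ?_ hc
      refine Real.logb_le_logb_of_le one_lt_two (div_pos hNpos (mul_pos hD1pos hD2pos)) ?_
      rw [div_le_div_iff₀ (mul_pos hD1pos hD2pos) hD2pos]
      nlinarith
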